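/- With the pseudo joint density P*(Y,α) = φ(α)·∏_{j=1}^m p_j(Y_j|α)^{w_j}, the marginal pseudo likelihood obtained by integrating out α satisfies: −2 log ∫ P*(Y,α) dα = (Σ_j w_j) log 2π + log(1 + Σ_j w_j γ_j²/σ_j²) + Σ_j w_j log σ_j² + Σ_j w_j(Y_j−μ_j)²/σ_j² − (Σ_j w_j(Y_j−μ_j)γ_j/σ_j²)² / (1 + Σ_j w_j γ_j²/σ_j²). -/

import Mathlib

open Real Finset MeasureTheory

/-- Integrating the latent variable out of the pseudo joint density gives
the marginal pseudo likelihood formula. -/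
theorem marginal_pseudo_likelihood
    (m : ℕ) (μ γ σ w Y : Fin m → ℝ)
    (hσ : ∀ j, 0 < σ j) (hw : ∀ j, 0 < w j) :
    -2 * Real.log (∫ a : ℝ,
        ((Real.sqrt (2 * π))⁻¹ * Real.exp (-(a ^ 2) / 2)) *
          ∏ j, ((Real.sqrt (2 * π * σ j ^ 2))⁻¹ *
              Real.exp (-(Y j - μ j - γ j * a) ^ 2 / (2 * σ j ^ 2))) ^ (w j))
      = (∑ j, w j) * Real.log (2 * π)
        + Real.log (1 + ∑ j, w j * γ j ^ 2 / σ j ^ 2)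
        + ∑ j, w j * Real.log (σ j ^ 2)
        + ∑ j, w j * (Y j - μ j) ^ 2 / σ j ^ 2
        - (∑ j, w j * (Y j - μ j) * γ j / σ j ^ 2) ^ 2 /
            (1 + ∑ j, w j * γ j ^ 2 / σ j ^ 2) := by
  have hπ : (0:ℝ) < π := Real.pi_pos
  have hσ2 : ∀ j, (0:ℝ) < σ j ^ 2 := fun j => by have := hσ j; positivity
  set S : ℝ := ∑ j, w j * γ j ^ 2 / σ j ^ 2 with hS
  set A : ℝ := 1 + S with hA
  set B : ℝ := ∑ j, w j * (Y j - μ j) * γ j / σ j ^ 2 with hB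
  set C0 : ℝ := ∑ j, w j * (Y j - μ j) ^ 2 / σ j ^ 2 with hC0
  have hS0 : (0:ℝ) ≤ S := by
    rw [hS]
    exact Finset.sum_nonneg fun j _ => by have := hσ2 j; have := (hw j).le; positivity
  have hA0 : (0:ℝ) < A := by rw [hA]; linarith
  set K0 : ℝ := (Real.sqrt (2 * π))⁻¹ * ∏ j, ((Real.sqrt (2 * π * σ j ^ 2))⁻¹) ^ (w j)
    with hK0
  set R : ℝ := B ^ 2 / (2 * A) - C0 / 2 with hR
  have hK0pos : 0 < K0 := by
    rw [hK0]
    apply mul_pos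
    · have : (0:ℝ) < Real.sqrt (2 * π) := Real.sqrt_pos.2 (by positivity)
      positivity
    · exact Finset.prod_pos fun j _ => Real.rpow_pos_of_pos
        (inv_pos.2 (Real.sqrt_pos.2 (by have := hσ2 j; positivity))) _
  -- pointwise rewriting of the integrand
  have hpt : ∀ a : ℝ,
      ((Real.sqrt (2 * π))⁻¹ * Real.exp (-(a ^ 2) / 2)) *
          ∏ j, ((Real.sqrt (2 * π * σ j ^ 2))⁻¹ *
              Real.exp (-(Y j - μ j - γ j * a) ^ 2 / (2 * σ j ^ 2))) ^ (w j)
        = (K0 * Real.exp R) * Real.exp (-(A/2) * (a - B/A) ^ 2) := by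
    intro a
    have h1 : ∀ j : Fin m,
        ((Real.sqrt (2 * π * σ j ^ 2))⁻¹ *
            Real.exp (-(Y j - μ j - γ j * a) ^ 2 / (2 * σ j ^ 2))) ^ (w j)
          = ((Real.sqrt (2 * π * σ j ^ 2))⁻¹) ^ (w j) *
              Real.exp (w j * (-(Y j - μ j - γ j * a) ^ 2 / (2 * σ j ^ 2))) := by
      intro j
      have hb : (0:ℝ) ≤ (Real.sqrt (2 * π * σ j ^ 2))⁻¹ := by positivity
      rw [Real.mul_rpow hb (Real.exp_pos _).le,
        Real.rpow_def_of_pos (Real.exp_pos _), Real.log_exp,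
        mul_comm (-(Y j - μ j - γ j * a) ^ 2 / (2 * σ j ^ 2)) (w j)]
    rw [Finset.prod_congr rfl (fun j _ => h1 j), Finset.prod_mul_distrib, ← Real.exp_sum]
    have hT : (∑ j, w j * (-(Y j - μ j - γ j * a) ^ 2 / (2 * σ j ^ 2)))
        = (-(1/2)) * C0 + a * B + (-(a ^ 2 / 2)) * S := by
      rw [hC0, hB, hS]
      rw [show (∑ j, w j * (-(Y j - μ j - γ j * a) ^ 2 / (2 * σ j ^ 2)))
          = ∑ j, ((-(1/2)) * (w j * (Y j - μ j) ^ 2 / σ j ^ 2)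
              + a * (w j * (Y j - μ j) * γ j / σ j ^ 2)
              + (-(a ^ 2 / 2)) * (w j * γ j ^ 2 / σ j ^ 2)) from
        Finset.sum_congr rfl fun j _ => by
          have h := (hσ2 j).ne'
          field_simp
          ring]
      simp only [Finset.sum_add_distrib, ← Finset.mul_sum]
    have hexp : -(a ^ 2) / 2 + (∑ j, w j * (-(Y j - μ j - γ j * a) ^ 2 / (2 * σ j ^ 2)))
        = R + (-(A/2) * (a - B/A) ^ 2) := by
      rw [hT, hR, hA]
      have h1S : (1 + S) ≠ 0 := by linarith
      field_simp
      ring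
    calc ((Real.sqrt (2 * π))⁻¹ * Real.exp (-(a ^ 2) / 2)) *
          ((∏ j, ((Real.sqrt (2 * π * σ j ^ 2))⁻¹) ^ (w j)) *
            Real.exp (∑ j, w j * (-(Y j - μ j - γ j * a) ^ 2 / (2 * σ j ^ 2))))
        = K0 * Real.exp (-(a ^ 2) / 2
            + (∑ j, w j * (-(Y j - μ j - γ j * a) ^ 2 / (2 * σ j ^ 2)))) := by
          rw [Real.exp_add, hK0]; ring
      _ = (K0 * Real.exp R) * Real.exp (-(A/2) * (a - B/A) ^ 2) := by
          rw [hexp, Real.exp_add]; ring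
  -- compute the integral
  have hint : (∫ a : ℝ,
      ((Real.sqrt (2 * π))⁻¹ * Real.exp (-(a ^ 2) / 2)) *
        ∏ j, ((Real.sqrt (2 * π * σ j ^ 2))⁻¹ *
            Real.exp (-(Y j - μ j - γ j * a) ^ 2 / (2 * σ j ^ 2))) ^ (w j))
      = (K0 * Real.exp R) * Real.sqrt (π / (A/2)) := by
    rw [integral_congr_ae (Filter.Eventually.of_forall hpt),
      MeasureTheory.integral_const_mul]
    congr 1
    rw [show (∫ a : ℝ, Real.exp (-(A/2) * (a - B/A) ^ 2))
        = ∫ a : ℝ, Real.exp (-(A/2) * a ^ 2) from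
      integral_sub_right_eq_self (fun x => Real.exp (-(A/2) * x ^ 2)) (B/A)]
    exact integral_gaussian (A/2)
  rw [hint]
  have hsqpos : (0:ℝ) < Real.sqrt (π / (A/2)) := Real.sqrt_pos.2 (by positivity)
  rw [Real.log_mul (by positivity) hsqpos.ne',
    Real.log_mul hK0pos.ne' (Real.exp_pos _).ne', Real.log_exp]
  have hlogK0 : Real.log K0
      = -(Real.log (2 * π)) / 2
        + ∑ j, w j * (-(Real.log (2 * π) + Real.log (σ j ^ 2)) / 2) := by
    rw [hK0, Real.log_mul (by positivity) (Finset.prod_pos fun j _ =>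
        Real.rpow_pos_of_pos (inv_pos.2 (Real.sqrt_pos.2 (by have := hσ2 j; positivity))) _).ne',
      Real.log_inv, Real.log_sqrt (by positivity),
      Real.log_prod (fun j _ => (Real.rpow_pos_of_pos
        (inv_pos.2 (Real.sqrt_pos.2 (by have := hσ2 j; positivity))) _).ne')]
    congr 1
    · ring
    · refine Finset.sum_congr rfl fun j _ => ?_
      rw [Real.log_rpow (inv_pos.2 (Real.sqrt_pos.2 (by have := hσ2 j; positivity))),
        Real.log_inv, Real.log_sqrt (show (0:ℝ) ≤ 2 * π * σ j ^ 2 by have := hσ2 j; positivity),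
        Real.log_mul (by positivity) (hσ2 j).ne']
      ring
  have hsum : ∑ j, w j * (-(Real.log (2 * π) + Real.log (σ j ^ 2)) / 2)
      = -((∑ j, w j) * Real.log (2 * π) + ∑ j, w j * Real.log (σ j ^ 2)) / 2 := by
    rw [show (∑ j, w j * (-(Real.log (2 * π) + Real.log (σ j ^ 2)) / 2))
        = ∑ j, ((-(1/2)) * Real.log (2 * π) * w j
            + (-(1/2)) * (w j * Real.log (σ j ^ 2))) from
      Finset.sum_congr rfl fun j _ => by ring]
    rw [Finset.sum_add_distrib, ← Finset.mul_sum, ← Finset.mul_sum]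
    ring
  have hlogsq : Real.log (Real.sqrt (π / (A/2)))
      = (Real.log (2 * π) - Real.log A) / 2 := by
    have hAq : π / (A/2) = 2 * π / A := by
      rw [div_div_eq_mul_div]; ring
    rw [hAq, Real.log_sqrt (show (0:ℝ) ≤ 2 * π / A by positivity),
      Real.log_div (show (2:ℝ) * π ≠ 0 by positivity) hA0.ne']
  rw [hlogK0, hsum, hlogsq, hR]
  field_simp [hA0.ne']
  ring
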